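/- Let η be the constructed Toeplitz array and for n≥1 let U_n={x∈Σ^G : x(g)=η_n(g) for all g∈D_{n+1}}, where η_n∈Σ^G is defined by η_n(γg)=η(g) for γ∈Γ_n, g∈D_n. Let n≥1 and m>n with m≡n (mod r). If γ∈Γ_{n+1}∩D_m satisfies γ∉D_{n+1}Γ_{n+2} ∪ ⋯ ∪ D_{m-1}Γ_m, then σ^{γ⁻¹}η∈U_n; in particular U_n intersects the σ-orbit of η. -/

import Mathlib

open Pointwise MeasureTheory Filter Topology

/-- The (left) shift action of `G` on `G → A`: `(σ^g x)(h) = x(g⁻¹ h)`. -/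
def shift {G A : Type*} [Group G] (g : G) (x : G → A) : G → A := fun h => x (g⁻¹ * h)

/-- `Per(x, Γ, α) = {g ∈ G : x(γ g) = α for all γ ∈ Γ}`. -/
def Per {G A : Type*} [Group G] (x : G → A) (Γ : Subgroup G) (α : A) : Set G :=
  {g : G | ∀ γ ∈ Γ, x (γ * g) = α}

/-- `Per(x, Γ) = ⋃_α Per(x, Γ, α)`. -/
def PerAll {G A : Type*} [Group G] (x : G → A) (Γ : Subgroup G) : Set G :=
  ⋃ α : A, Per x Γ α

/-- `x` is a Toeplitz array if every `g ∈ G` is periodic for some finite index subgroup. -/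
def IsToeplitz {G A : Type*} [Group G] (x : G → A) : Prop :=
  ∀ g : G, ∃ Γ : Subgroup G, Γ.FiniteIndex ∧ g ∈ PerAll x Γ

/-- `D` is a fundamental domain of `G / Γ`: every `g ∈ G` can be written uniquely as
`g = γ u` with `γ ∈ Γ` and `u ∈ D`. -/
def IsFundDomain {G : Type*} [Group G] (Γ : Subgroup G) (D : Finset G) : Prop :=
  ∀ g : G, ∃! p : G × G, p.1 ∈ Γ ∧ p.2 ∈ D ∧ g = p.1 * p.2

/-- The symbol `α_{m+1} ∈ Σ = {1, …, r}` of the construction: the symbol `j ∈ {1, …, r}` with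
`j ≡ m+1 (mod r)`, rendered in `Fin r` (the symbol `i ∈ {1, …, r}` corresponds to `i-1`). -/
def sym {r : ℕ} (hr : 1 < r) (m : ℕ) : Fin r := ⟨m % r, Nat.mod_lt m (by omega)⟩

theorem statement14 {G : Type*} [Group G] [Countable G]
    {r : ℕ} (hr : 1 < r)
    -- the sequence of subgroups (with the convention `Γ 0 = G`, the data of the paper being
    -- `Γ 1 > Γ 2 > ⋯`)
    (Γ : ℕ → Subgroup G) (hΓ0 : Γ 0 = ⊤) (hanti : StrictAnti Γ)
    (hnormal : ∀ n, (Γ n).Normal) (hfi : ∀ n, (Γ n).FiniteIndex)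
    (hint : (⨅ n, Γ n) = ⊥) (hidx : ∀ n, 3 ≤ (Γ (n + 1)).relIndex (Γ n))
    -- the fundamental domains
    (D : ℕ → Finset G) (hD0 : D 0 = {1}) (hfund : ∀ n, IsFundDomain (Γ n) (D n))
    (hone : ∀ n, (1 : G) ∈ D n) (hDmono : ∀ n, D n ⊆ D (n + 1))
    (hcoverD : ∀ g : G, ∃ n, g ∈ D n)
    (hdecomp : ∀ i j, i < j →
      (D j : Set G) = ⋃ v ∈ (D j : Set G) ∩ (Γ i : Set G), v • (D i : Set G))
    -- the sets `J m`
    (J : ℕ → Set G) (hJ0 : J 0 = {1})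
    (hJ : ∀ m, 1 ≤ m → J m = (D m : Set G) \ ⋃ i < m, J i * ((Γ (i + 1) : Subgroup G) : Set G))
    -- the Toeplitz array `η`
    (η : G → Fin r)
    (hηdef : ∀ (m : ℕ), ∀ h ∈ J m, ∀ g ∈ Γ (m + 1), η (h * g) = sym hr m)
    -- the `Γ n`-periodic configurations `η_n`, with `η_n(γ g) = η(g)` for `γ ∈ Γ n`, `g ∈ D n`
    (ηn : ℕ → G → Fin r) (hηn : ∀ n, ∀ γ ∈ Γ n, ∀ g ∈ D n, ηn n (γ * g) = η g)
    -- the cylinder sets `U n = {x : x|_{D (n+1)} = η_n|_{D (n+1)}}`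
    (U : ℕ → Set (G → Fin r)) (hU : ∀ n, U n = {x | ∀ g ∈ D (n + 1), x g = ηn n g}) :
    ∀ n, 1 ≤ n → ∀ m, n < m → m % r = n % r →
      (∀ γ ∈ Γ (n + 1), γ ∈ D m →
        γ ∉ ⋃ s ∈ Finset.Icc (n + 1) (m - 1),
              (D s : Set G) * ((Γ (s + 1) : Subgroup G) : Set G) →
        shift γ⁻¹ η ∈ U n) ∧
      -- in particular, `U n` meets the `σ`-orbit of `η`
      ∃ g : G, shift g η ∈ U n := by

  -- monotonicity helpers
  have hΓmono : ∀ {i j : ℕ}, i ≤ j → Γ j ≤ Γ i := fun {i j} h => hanti.antitone h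
  have hDmono' : ∀ {i j : ℕ}, i ≤ j → D i ⊆ D j := fun {i j} h =>
    (monotone_nat_of_le_succ hDmono) h
  have hJsub : ∀ i, J i ⊆ (D i : Set G) := by
    intro i
    rcases Nat.eq_zero_or_pos i with h0 | h1
    · subst h0; rw [hJ0, hD0]; simp
    · rw [hJ i h1]; exact Set.diff_subset
  have uniq : ∀ k (γ₁ u₁ γ₂ u₂ : G), γ₁ ∈ Γ k → u₁ ∈ D k → γ₂ ∈ Γ k → u₂ ∈ D k →
      γ₁ * u₁ = γ₂ * u₂ → γ₁ = γ₂ ∧ u₁ = u₂ := by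
    intro k γ₁ u₁ γ₂ u₂ h1 h2 h3 h4 heq
    obtain ⟨p, -, hp⟩ := hfund k (γ₁ * u₁)
    have e1 := hp (γ₁, u₁) ⟨h1, h2, rfl⟩
    have e2 := hp (γ₂, u₂) ⟨h3, h4, heq⟩
    have e3 : (γ₁, u₁) = (γ₂, u₂) := e1.trans e2.symm
    exact ⟨congrArg Prod.fst e3, congrArg Prod.snd e3⟩
  have cover : ∀ k, ∀ g ∈ D k, ∃ i ≤ k, ∃ h ∈ J i, ∃ δ ∈ Γ (i + 1), g = h * δ := by
    intro k g hg
    rcases Nat.eq_zero_or_pos k with h0 | h1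
    · subst h0
      rw [hD0, Finset.mem_singleton] at hg
      exact ⟨0, le_rfl, 1, by rw [hJ0]; rfl, 1, one_mem _, by simp [hg]⟩
    · by_cases hgJ : g ∈ J k
      · exact ⟨k, le_rfl, g, hgJ, 1, one_mem _, (mul_one g).symm⟩
      · rw [hJ k h1] at hgJ
        have hmem : g ∈ ⋃ i < k, J i * ((Γ (i + 1) : Subgroup G) : Set G) := by
          by_contra hcon
          exact hgJ ⟨Finset.mem_coe.mpr hg, hcon⟩
        obtain ⟨i, hik, hmem'⟩ := Set.mem_iUnion₂.mp hmem
        obtain ⟨h, hh, δ, hδ, heq⟩ := Set.mem_mul.mp hmem'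
        exact ⟨i, le_of_lt hik, h, hh, δ, hδ, heq.symm⟩
  have ηval : ∀ i (h δ c : G), h ∈ J i → δ ∈ Γ (i + 1) → c ∈ Γ (i + 1) →
      η (c * (h * δ)) = sym hr i := by
    intro i h δ c hh hδ hc
    have hconj : h⁻¹ * c * h ∈ Γ (i + 1) := by
      have := (hnormal (i + 1)).conj_mem c hc h⁻¹
      simpa using this
    have e : c * (h * δ) = h * ((h⁻¹ * c * h) * δ) := by group
    rw [e]
    exact hηdef i h hh _ (mul_mem hconj hδ)
  intro n hn m hnm hmod
  have hm1 : 1 ≤ m := by omega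
  have hm2 : n + 1 < m := by
    rcases Nat.lt_or_ge (n + 1) m with h | h
    · exact h
    · exfalso
      have hmeq : m = n + 1 := by omega
      subst hmeq
      have h2 : r ∣ (n + 1 - n) := (Nat.modEq_iff_dvd' (Nat.le_succ n)).mp hmod.symm
      simp only [Nat.add_sub_cancel_left] at h2
      have := Nat.le_of_dvd one_pos h2
      omega
  have key : ∀ γ ∈ Γ (n + 1), γ ∈ D m →
      γ ∉ ⋃ s ∈ Finset.Icc (n + 1) (m - 1),
            (D s : Set G) * ((Γ (s + 1) : Subgroup G) : Set G) →
      shift γ⁻¹ η ∈ U n := by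
    intro γ hγΓ hγD hγavoid
    have havoid : ∀ s, n + 1 ≤ s → s ≤ m - 1 →
        γ ∉ (D s : Set G) * ((Γ (s + 1) : Subgroup G) : Set G) := by
      intro s hs1 hs2 hmem
      exact hγavoid (Set.mem_iUnion₂.mpr ⟨s, Finset.mem_Icc.mpr ⟨hs1, hs2⟩, hmem⟩)
    rw [hU]
    simp only [Set.mem_setOf_eq]
    intro g hg
    have hshift : shift γ⁻¹ η g = η (γ * g) := by simp [shift]
    obtain ⟨⟨v, u⟩, ⟨hv, hu, hgvu⟩, -⟩ := hfund n g
    have hηng : ηn n g = η u := by rw [hgvu]; exact hηn n v hv u hu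
    obtain ⟨i, hik, h, hhJ, δ, hδ, hghδ⟩ := cover (n + 1) g hg
    rw [hshift, hηng]
    rcases Nat.lt_or_ge i (n + 1) with hlt | hge
    · -- case i ≤ n
      have hγi : γ ∈ Γ (i + 1) := hΓmono (by omega) hγΓ
      have hL : η (γ * g) = sym hr i := by rw [hghδ]; exact ηval i h δ γ hhJ hδ hγi
      have hR : η u = sym hr i := by
        rcases Nat.lt_or_ge i n with hlt2 | hge2
        · -- i < n
          have hvi : v ∈ Γ (i + 1) := hΓmono (by omega) hv
          have hconj : h⁻¹ * v⁻¹ * h ∈ Γ (i + 1) := by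
            have := (hnormal (i + 1)).conj_mem v⁻¹ (inv_mem hvi) h⁻¹
            simpa using this
          have e : v * u = h * δ := hgvu.symm.trans hghδ
          have hu' : u = h * ((h⁻¹ * v⁻¹ * h) * δ) := by
            have e2 : v * u = v * (h * ((h⁻¹ * v⁻¹ * h) * δ)) := by rw [e]; group
            exact mul_left_cancel e2
          rw [hu']
          exact hηdef i h hhJ _ (mul_mem hconj hδ)
        · -- i = n
          have hieq : i = n := by omega
          subst hieq
          have hδn : δ ∈ Γ i := hΓmono (Nat.le_succ i) hδ
          have hconj : h * δ * h⁻¹ ∈ Γ i := (hnormal i).conj_mem δ hδn h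
          have hhD : h ∈ D i := Finset.mem_coe.mp (hJsub i hhJ)
          have e : v * u = (h * δ * h⁻¹) * h := by
            rw [← hgvu, hghδ]; group
          obtain ⟨-, hu2⟩ := uniq i v u (h * δ * h⁻¹) h hv hu hconj hhD e
          rw [hu2]
          have := hηdef i h hhJ 1 (one_mem _)
          rwa [mul_one] at this
      rw [hL, hR]
    · -- case i = n + 1
      have hieq : i = n + 1 := le_antisymm hik hge
      subst hieq
      -- first : η u = sym n
      obtain ⟨i', hik', h', hh', δ', hδ', huδ'⟩ := cover n u hu
      have hi'n : i' = n := by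
        by_contra hne
        have hlt' : i' < n := by omega
        have hvmem : v ∈ Γ (i' + 1) := hΓmono (by omega) hv
        have hδmem : δ⁻¹ ∈ Γ (i' + 1) := inv_mem (hΓmono (by omega) hδ)
        have hconj : h'⁻¹ * v * h' ∈ Γ (i' + 1) := by
          have := (hnormal (i' + 1)).conj_mem v hvmem h'⁻¹
          simpa using this
        have hheq : h = h' * (((h'⁻¹ * v * h') * δ') * δ⁻¹) := by
          have e : h * δ = v * (h' * δ') := by rw [← hghδ, hgvu, huδ']
          have step : h = v * (h' * δ') * δ⁻¹ := by rw [← e]; group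
          rw [step]; group
        have hmem : h ∈ J i' * ((Γ (i' + 1) : Subgroup G) : Set G) :=
          Set.mem_mul.mpr ⟨h', hh', _, mul_mem (mul_mem hconj hδ') hδmem, hheq.symm⟩
        have hhJ' := hhJ
        rw [hJ (n + 1) (by omega)] at hhJ'
        exact hhJ'.2 (Set.mem_iUnion₂.mpr ⟨i', by omega, hmem⟩)
      subst hi'n
      have hRu : η u = sym hr i' := by rw [huδ']; exact hηdef i' h' hh' δ' hδ'
      -- now : γ * g ∈ J m
      have hγgD : γ * g ∈ (D m : Set G) := by
        rw [hdecomp (i' + 1) m hm2]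
        refine Set.mem_iUnion₂.mpr ⟨γ, ⟨Finset.mem_coe.mpr hγD, hγΓ⟩, ?_⟩
        rw [Set.mem_smul_set]
        exact ⟨g, Finset.mem_coe.mpr hg, rfl⟩
      have hγgJ : γ * g ∈ J m := by
        rw [hJ m hm1]
        refine ⟨hγgD, ?_⟩
        intro hmem
        obtain ⟨i₁, hi₁m, hmem₁⟩ := Set.mem_iUnion₂.mp hmem
        obtain ⟨h₁, hh₁, δ₁, hδ₁, heq₁⟩ := Set.mem_mul.mp hmem₁
        rcases Nat.lt_or_ge i₁ (i' + 1) with hlt₁ | hge₁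
        · -- i₁ ≤ n : contradiction with h ∈ J (n+1)
          have hγ' : γ⁻¹ ∈ Γ (i₁ + 1) := inv_mem (hΓmono (by omega) hγΓ)
          have hδi : δ⁻¹ ∈ Γ (i₁ + 1) := inv_mem (hΓmono (by omega) hδ)
          have hconj : h₁⁻¹ * γ⁻¹ * h₁ ∈ Γ (i₁ + 1) := by
            have := (hnormal (i₁ + 1)).conj_mem γ⁻¹ hγ' h₁⁻¹
            simpa using this
          have hheq : h = h₁ * ((((h₁⁻¹ * γ⁻¹ * h₁) * δ₁) * δ⁻¹)) := by
            have e : h₁ * δ₁ = γ * (h * δ) := by rw [heq₁, hghδ]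
            have step : h = γ⁻¹ * (h₁ * δ₁) * δ⁻¹ := by rw [e]; group
            rw [step]; group
          have hmem2 : h ∈ J i₁ * ((Γ (i₁ + 1) : Subgroup G) : Set G) :=
            Set.mem_mul.mpr ⟨h₁, hh₁, _, mul_mem (mul_mem hconj hδ₁) hδi, hheq.symm⟩
          have hhJ' := hhJ
          rw [hJ (i' + 1) (by omega)] at hhJ'
          exact hhJ'.2 (Set.mem_iUnion₂.mpr ⟨i₁, by omega, hmem2⟩)
        · -- n + 1 ≤ i₁ < m : contradiction with the avoidance hypothesis
          have hsplit : ∃ v₁ w, v₁ ∈ (D i₁ : Set G) ∧ v₁ ∈ Γ (i' + 1) ∧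
              w ∈ D (i' + 1) ∧ h₁ = v₁ * w := by
            rcases eq_or_lt_of_le hge₁ with heq' | hlt'
            · exact ⟨1, h₁, by simpa using hone i₁, one_mem _,
                by rw [heq']; exact Finset.mem_coe.mp (hJsub i₁ hh₁), (one_mul h₁).symm⟩
            · have hh₁D : h₁ ∈ (D i₁ : Set G) := hJsub i₁ hh₁
              rw [hdecomp (i' + 1) i₁ hlt'] at hh₁D
              obtain ⟨v₁, hv₁mem, hsm⟩ := Set.mem_iUnion₂.mp hh₁D
              obtain ⟨w, hwD, hweq⟩ := Set.mem_smul_set.mp hsm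
              exact ⟨v₁, w, hv₁mem.1, hv₁mem.2, Finset.mem_coe.mp hwD,
                by rw [← hweq]; rfl⟩
          obtain ⟨v₁, w, hv₁D, hv₁Γ, hwD, hh₁eq⟩ := hsplit
          have hgδg : g * δ₁ * g⁻¹ ∈ Γ (i₁ + 1) := (hnormal (i₁ + 1)).conj_mem δ₁ hδ₁ g
          have hgδg' : g * δ₁ * g⁻¹ ∈ Γ (i' + 1) := hΓmono (by omega) hgδg
          have hv₁γ : v₁⁻¹ * γ ∈ Γ (i' + 1) := mul_mem (inv_mem hv₁Γ) hγΓ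
          have e : γ * g = v₁ * (w * δ₁) := by rw [← heq₁, hh₁eq]; group
          have hwg : w * g⁻¹ ∈ Γ (i' + 1) := by
            have e2 : v₁⁻¹ * (γ * g) = w * δ₁ := by rw [e]; group
            have e3 : w * g⁻¹ = (v₁⁻¹ * γ) * (g * δ₁ * g⁻¹)⁻¹ := by
              have e4 : w * g⁻¹ = (v₁⁻¹ * (γ * g)) * δ₁⁻¹ * g⁻¹ := by rw [e2]; group
              rw [e4]; group
            rw [e3]
            exact mul_mem hv₁γ (inv_mem hgδg')
          obtain ⟨-, hgw⟩ := uniq (i' + 1) (w * g⁻¹) g 1 w hwg hg (one_mem _) hwD (by group)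
          have hγeq : γ = v₁ * (g * δ₁ * g⁻¹) := by
            have e3 : γ * g = v₁ * g * δ₁ := by
              rw [← heq₁, hh₁eq, hgw]
            have step : γ = (v₁ * g * δ₁) * g⁻¹ := by rw [← e3]; group
            rw [step]; group
          exact havoid i₁ hge₁ (by omega)
            (Set.mem_mul.mpr ⟨v₁, hv₁D, _, hgδg, hγeq.symm⟩)
      have hL : η (γ * g) = sym hr m := by
        have := hηdef m (γ * g) hγgJ 1 (one_mem _)
        rwa [mul_one] at this
      have hsymeq : sym hr m = sym hr i' := by
        simp only [sym, Fin.mk.injEq]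
        exact hmod
      rw [hL, hRu, hsymeq]
  refine ⟨key, ?_⟩
  -- existence of an avoiding element
  have exC : ∀ k, n ≤ k → ∃ w, w ∈ Γ (n + 1) ∧ w ∈ D (k + 1) ∧
      ∀ s, n + 1 ≤ s → s ≤ k →
        w ∉ (D s : Set G) * ((Γ (s + 1) : Subgroup G) : Set G) := by
    intro k hk
    induction k, hk using Nat.le_induction with
    | base =>
      refine ⟨1, one_mem _, hone _, ?_⟩
      intro s h1 h2
      exact absurd (h1.trans h2) (by omega)
    | succ k hk ih =>
      obtain ⟨w, hwΓ, hwD, hwav⟩ := ih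
      obtain ⟨c, hc1, hc2⟩ := SetLike.exists_of_lt (hanti (Nat.lt_succ_self (k + 1)))
      obtain ⟨⟨γ₂, u₂⟩, ⟨hγ₂, hu₂, hcw⟩, -⟩ := hfund (k + 2) (c * w)
      have hu₂eq : u₂ = (γ₂⁻¹ * c) * w := by
        apply mul_left_cancel (a := γ₂)
        rw [← hcw]; group
      refine ⟨u₂, ?_, hu₂, ?_⟩
      · rw [hu₂eq]
        exact mul_mem (mul_mem (inv_mem (hΓmono (by omega) hγ₂))
          (hΓmono (by omega) hc1)) hwΓ
      · intro s h1 h2 hmem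
        obtain ⟨u₃, hu₃, δ₃, hδ₃, heq₃⟩ := Set.mem_mul.mp hmem
        rcases Nat.lt_or_ge k s with hks | hsk
        · -- s = k + 1
          have hseq : s = k + 1 := by omega
          subst hseq
          have hconj : u₃ * δ₃ * u₃⁻¹ ∈ Γ (k + 2) := (hnormal (k + 2)).conj_mem δ₃ hδ₃ u₃
          have hu₃D : u₃ ∈ D (k + 2) := hDmono' (by omega) (Finset.mem_coe.mp hu₃)
          obtain ⟨-, hu₂u₃⟩ := uniq (k + 2) (u₃ * δ₃ * u₃⁻¹) u₃ 1 u₂ hconj hu₃D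
            (one_mem _) hu₂ (by rw [one_mul, ← heq₃]; group)
          have hu₂D1 : u₂ ∈ D (k + 1) := hu₂u₃ ▸ (Finset.mem_coe.mp hu₃)
          have hγc : γ₂⁻¹ * c ∈ Γ (k + 1) :=
            mul_mem (inv_mem (hΓmono (by omega) hγ₂)) hc1
          obtain ⟨hone', -⟩ := uniq (k + 1) (γ₂⁻¹ * c) w 1 u₂ hγc hwD (one_mem _) hu₂D1
            (by rw [one_mul, hu₂eq])
          exact hc2 (inv_mul_eq_one.mp hone' ▸ hγ₂)
        · -- s ≤ k : contradiction with hwav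
          have hcg : c⁻¹ * γ₂ ∈ Γ (s + 1) :=
            mul_mem (inv_mem (hΓmono (by omega) hc1)) (hΓmono (by omega) hγ₂)
          have hconj : u₃⁻¹ * (c⁻¹ * γ₂) * u₃ ∈ Γ (s + 1) := by
            have := (hnormal (s + 1)).conj_mem _ hcg u₃⁻¹
            simpa using this
          have e : w = (c⁻¹ * γ₂) * u₂ := by rw [hu₂eq]; group
          have hweq : w = u₃ * ((u₃⁻¹ * (c⁻¹ * γ₂) * u₃) * δ₃) := by
            rw [e, ← heq₃]; group
          exact hwav s h1 hsk
            (Set.mem_mul.mpr ⟨u₃, hu₃, _, mul_mem hconj hδ₃, hweq.symm⟩)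
  obtain ⟨w, hwΓ, hwD, hwav⟩ := exC (m - 1) (by omega)
  have hm1' : m - 1 + 1 = m := by omega
  rw [hm1'] at hwD
  refine ⟨w⁻¹, key w hwΓ hwD ?_⟩
  intro hmem
  obtain ⟨s, hs, hmem'⟩ := Set.mem_iUnion₂.mp hmem
  rw [Finset.mem_Icc] at hs
  exact hwav s hs.1 hs.2 hmem'
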